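/- Let α ∈ (0,1) and z > 0 satisfy Φ̄(z) = α/2, and define g(ω) = z/√ω + (2/α)·( φ(z/√ω) − (z/√ω)·Φ̄(z/√ω) ) for ω > 0. Then g is strictly decreasing on (0,1] and strictly increasing on [1,∞); consequently, for any constants c ≥ 0 and d > 0, the expected-score function R(ω) = c + d·g(ω) attains its minimum over (0,∞) uniquely at ω = 1. In particular, in the correctly specified Gaussian model Y_i ~ N(μ,σ²) with known σ² and flat prior on μ, the expected score R_n(ω) = σ²/n + (2σ/√n)·g(ω) of the generalized posterior is uniquely minimized at learning rate ω = 1. -/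

import Mathlib

open MeasureTheory ProbabilityTheory Set

/-- The standard normal density `φ(t) = (2π)^{-1/2} exp(-t²/2)`. -/
noncomputable def phi (t : ℝ) : ℝ := (Real.sqrt (2 * Real.pi))⁻¹ * Real.exp (-t ^ 2 / 2)

/-- The standard normal cumulative distribution function `Φ`. -/
noncomputable def Phi (t : ℝ) : ℝ := ((gaussianReal 0 1) (Iic t)).toReal

/-- The expected-interval-score factor `g(ω) = z/√ω + (2/α)(φ(z/√ω) − (z/√ω) Φ̄(z/√ω))`. -/
noncomputable def g (z α ω : ℝ) : ℝ :=
  z / Real.sqrt ω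
    + (2 / α) * (phi (z / Real.sqrt ω) - (z / Real.sqrt ω) * (1 - Phi (z / Real.sqrt ω)))

lemma phi_eq : phi = gaussianPDFReal 0 1 := by
  ext x; simp [phi, gaussianPDFReal]

lemma Phi_eq (t : ℝ) : Phi t = ∫ x in Iic t, phi x := by
  rw [Phi, gaussianReal_apply_eq_integral 0 one_ne_zero, ENNReal.toReal_ofReal, phi_eq]
  exact setIntegral_nonneg measurableSet_Iic fun x _ => gaussianPDFReal_nonneg 0 1 x

lemma phi_integrable : Integrable phi := phi_eq ▸ integrable_gaussianPDFReal 0 1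

lemma phi_cont : Continuous phi := by
  apply Continuous.mul continuous_const
  exact (Real.continuous_exp.comp (by continuity))

lemma phi_pos (t : ℝ) : 0 < phi t := by
  have := Real.pi_pos
  unfold phi; positivity

lemma hasDerivAt_Phi (t : ℝ) : HasDerivAt Phi (phi t) t := by
  have h : ∀ s : ℝ, Phi s = Phi 0 + ∫ x in (0:ℝ)..s, phi x := by
    intro s
    have := intervalIntegral.integral_Iic_sub_Iic (μ := volume) (phi_integrable.integrableOn) (phi_integrable.integrableOn) (a := 0) (b := s)
    rw [Phi_eq, Phi_eq, ← this]; ring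
  have hd := (intervalIntegral.integral_hasDerivAt_right
    (phi_integrable.intervalIntegrable (μ := volume) (a := 0) (b := t))
    (phi_cont.stronglyMeasurableAtFilter _ _) phi_cont.continuousAt).const_add (Phi 0)
  exact HasDerivAt.congr_of_eventuallyEq hd (Filter.Eventually.of_forall h)

lemma Phi_strictMono : StrictMono Phi := by
  intro a b hab
  have : 0 < ∫ x in a..b, phi x :=
    intervalIntegral.intervalIntegral_pos_of_pos_on
      (phi_integrable.intervalIntegrable (μ := volume)) (fun x _ => phi_pos x) hab
  have heq := intervalIntegral.integral_Iic_sub_Iic (μ := volume)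
    (phi_integrable.integrableOn) (phi_integrable.integrableOn) (a := a) (b := b)
  rw [← Phi_eq, ← Phi_eq] at heq
  linarith

noncomputable def hfun (α : ℝ) (u : ℝ) : ℝ := u + (2/α) * (phi u - u * (1 - Phi u))

lemma hasDerivAt_phi (u : ℝ) : HasDerivAt phi (-u * phi u) u := by
  have h1 : HasDerivAt (fun t : ℝ => -t ^ 2 / 2) (-u) u := by
    have := ((hasDerivAt_pow 2 u).neg).div_const 2
    exact this.congr_deriv (by push_cast; ring)
  have h2 := ((h1.exp).const_mul (Real.sqrt (2 * Real.pi))⁻¹)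
  have he : -u * phi u = (Real.sqrt (2 * Real.pi))⁻¹ * (Real.exp (-u ^ 2 / 2) * -u) := by
    simp [phi]; ring
  rw [he]; exact h2

lemma hasDerivAt_hfun (α u : ℝ) :
    HasDerivAt (hfun α) (1 - (2/α) * (1 - Phi u)) u := by
  have h2 : HasDerivAt (fun u : ℝ => u * (1 - Phi u))
      (1 * (1 - Phi u) + u * (0 - phi u)) u :=
    (hasDerivAt_id u).mul ((hasDerivAt_const u 1).sub (hasDerivAt_Phi u))
  have := (hasDerivAt_id u).add (((hasDerivAt_phi u).sub h2).const_mul (2/α))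
  exact this.congr_deriv (by ring)

lemma hfun_anti (α z : ℝ) (hα : α ∈ Ioo (0:ℝ) 1) (hzα : 1 - Phi z = α / 2) :
    StrictAntiOn (hfun α) (Iic z) := by
  apply strictAntiOn_of_deriv_neg (convex_Iic z)
  · exact Continuous.continuousOn (by
      have : Differentiable ℝ (hfun α) := fun u => (hasDerivAt_hfun α u).differentiableAt
      exact this.continuous)
  · intro x hx
    rw [interior_Iic] at hx
    rw [(hasDerivAt_hfun α x).deriv]
    have h1 : Phi x < Phi z := Phi_strictMono hx
    have hα0 := hα.1
    have : α / 2 < 1 - Phi x := by linarith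
    have : 1 < (2/α) * (1 - Phi x) := by
      rw [div_mul_eq_mul_div, lt_div_iff₀ hα0]; linarith
    linarith

lemma hfun_mono (α z : ℝ) (hα : α ∈ Ioo (0:ℝ) 1) (hzα : 1 - Phi z = α / 2) :
    StrictMonoOn (hfun α) (Ici z) := by
  apply strictMonoOn_of_deriv_pos (convex_Ici z)
  · exact Continuous.continuousOn (by
      have : Differentiable ℝ (hfun α) := fun u => (hasDerivAt_hfun α u).differentiableAt
      exact this.continuous)
  · intro x hx
    rw [interior_Ici] at hx
    rw [(hasDerivAt_hfun α x).deriv]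
    have h1 : Phi z < Phi x := Phi_strictMono hx
    have hα0 := hα.1
    have : 1 - Phi x < α / 2 := by linarith
    have hnn : 0 ≤ 1 - Phi x := by
      have : Phi x ≤ 1 := by
        rw [Phi]
        exact ENNReal.toReal_le_of_le_ofReal zero_le_one (by simpa using prob_le_one)
      linarith
    have : (2/α) * (1 - Phi x) < 1 := by
      rw [div_mul_eq_mul_div, div_lt_one hα0]; linarith
    linarith

lemma g_eq (z α ω : ℝ) : g z α ω = hfun α (z / Real.sqrt ω) := rfl

/-- If `Φ̄(z) = α/2`, then `g` is strictly decreasing on `(0,1]` and strictly increasing on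
`[1,∞)`; consequently for any `c ≥ 0` and `d > 0` the expected-score function
`R(ω) = c + d g(ω)` attains its minimum over `(0,∞)` uniquely at `ω = 1`.  In particular,
in the correctly specified Gaussian model with known variance `σ²` and flat prior, the
expected score `R_n(ω) = σ²/n + (2σ/√n) g(ω)` is uniquely minimized at `ω = 1`. -/
theorem stmt13 (α z : ℝ) (hα : α ∈ Ioo (0 : ℝ) 1) (hz : 0 < z)
    (hzα : 1 - Phi z = α / 2) :
    StrictAntiOn (g z α) (Ioc (0 : ℝ) 1)
      ∧ StrictMonoOn (g z α) (Ici (1 : ℝ))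
      ∧ (∀ c : ℝ, 0 ≤ c → ∀ d : ℝ, 0 < d → ∀ ω : ℝ, 0 < ω → ω ≠ 1 →
          c + d * g z α 1 < c + d * g z α ω)
      ∧ (∀ σ : ℝ, 0 < σ → ∀ n : ℕ, 1 ≤ n → ∀ ω : ℝ, 0 < ω → ω ≠ 1 →
          σ ^ 2 / n + (2 * σ / Real.sqrt n) * g z α 1
            < σ ^ 2 / n + (2 * σ / Real.sqrt n) * g z α ω) := by
  have hanti : StrictAntiOn (g z α) (Ioc (0 : ℝ) 1) := by
    intro x hx y hy hxy
    rw [g_eq, g_eq]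
    have hsx : 0 < Real.sqrt x := Real.sqrt_pos.mpr hx.1
    have hsy : 0 < Real.sqrt y := Real.sqrt_pos.mpr (hx.1.trans hxy)
    have hlt : Real.sqrt x < Real.sqrt y := Real.sqrt_lt_sqrt hx.1.le hxy
    have hu : z / Real.sqrt y < z / Real.sqrt x :=
      div_lt_div_of_pos_left hz hsx hlt
    have hy1 : Real.sqrt y ≤ 1 := by
      rw [show (1:ℝ) = Real.sqrt 1 by simp]
      exact Real.sqrt_le_sqrt hy.2
    have hzy : z ≤ z / Real.sqrt y := by
      rw [le_div_iff₀ hsy]; nlinarith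
    exact hfun_mono α z hα hzα (mem_Ici.mpr hzy) (mem_Ici.mpr (hzy.trans hu.le)) hu
  have hmono : StrictMonoOn (g z α) (Ici (1 : ℝ)) := by
    intro x hx y hy hxy
    rw [g_eq, g_eq]
    have hx0 : (0:ℝ) < x := lt_of_lt_of_le one_pos hx
    have hsx : 0 < Real.sqrt x := Real.sqrt_pos.mpr hx0
    have hlt : Real.sqrt x < Real.sqrt y := Real.sqrt_lt_sqrt hx0.le hxy
    have hu : z / Real.sqrt y < z / Real.sqrt x :=
      div_lt_div_of_pos_left hz hsx hlt
    have hx1 : 1 ≤ Real.sqrt x := by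
      rw [show (1:ℝ) = Real.sqrt 1 by simp]
      exact Real.sqrt_le_sqrt hx
    have hxz : z / Real.sqrt x ≤ z := div_le_self hz.le hx1
    exact hfun_anti α z hα hzα (mem_Iic.mpr (hu.le.trans hxz)) (mem_Iic.mpr hxz) hu
  have hgmin : ∀ ω : ℝ, 0 < ω → ω ≠ 1 → g z α 1 < g z α ω := by
    intro ω hω hω1
    rcases lt_or_gt_of_ne hω1 with h | h
    · exact hanti ⟨hω, h.le⟩ ⟨one_pos, le_refl 1⟩ h
    · exact hmono (mem_Ici.mpr le_rfl) (mem_Ici.mpr h.le) h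
  refine ⟨hanti, hmono, ?_, ?_⟩
  · intro c _ d hd ω hω hω1
    have := hgmin ω hω hω1
    nlinarith
  · intro σ hσ n hn ω hω hω1
    have hsn : 0 < Real.sqrt n :=
      Real.sqrt_pos.mpr (by exact_mod_cast Nat.lt_of_lt_of_le Nat.zero_lt_one hn)
    have hd : 0 < 2 * σ / Real.sqrt n := by positivity
    have := hgmin ω hω hω1
    nlinarith
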